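/- Suppose the designer observes α perfectly and screens with payments only. Then an allocation rule x(α,β) is equitable and implementable if and only if x(α,β) = x̂(η(α,β)) for some weakly increasing x̂. -/
import Mathlib


open Set

/-- With `α` observed and payments only, an allocation rule is equitable
and implementable if and only if it is a weakly increasing function of merit. -/
theorem stmt15
    (Θ : Set (ℝ × ℝ)) (hΘopen : IsOpen Θ) (hΘconv : Convex ℝ Θ)
    (hΘbdd : Bornology.IsBounded Θ) (hΘpos : ∀ θ ∈ Θ, 0 < θ.2)
    (w : ℝ → ℝ) (hwpos : ∀ a, 0 < w a)
    (η : ℝ × ℝ → ℝ) (hηcont : Continuous η)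
    (hηα : ∀ b : ℝ, StrictMono fun a => η (a, b))
    (hηβ : ∀ a : ℝ, StrictMono fun b => η (a, b))
    (x : ℝ × ℝ → ℝ) (hxrange : ∀ θ ∈ Θ, x θ ∈ Icc (0:ℝ) 1) :
    -- equitable and implementable (IC only within each observed α-slice)
    ((∀ θ1 ∈ Θ, ∀ θ2 ∈ Θ, η θ1 = η θ2 → x θ1 = x θ2) ∧
      ∃ p : ℝ × ℝ → ℝ,
        (∀ θ ∈ Θ, ∀ θ' ∈ Θ, θ.1 = θ'.1 →
          θ.2 * x θ - w θ.1 * p θ ≥ θ.2 * x θ' - w θ.1 * p θ') ∧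
        (∀ θ ∈ Θ, 0 ≤ θ.2 * x θ - w θ.1 * p θ))
    ↔
    (∃ xhat : ℝ → ℝ, (∀ θ ∈ Θ, x θ = xhat (η θ)) ∧
      ∀ θ1 ∈ Θ, ∀ θ2 ∈ Θ, η θ1 ≤ η θ2 → xhat (η θ1) ≤ xhat (η θ2)) := by
  classical
  constructor
  · rintro ⟨heq, p, hic, hir⟩
    -- slice monotonicity from IC
    have hslice : ∀ θ ∈ Θ, ∀ θ' ∈ Θ, θ.1 = θ'.1 → θ.2 ≤ θ'.2 → x θ ≤ x θ' := by
      intro θ hθ θ' hθ' ha hb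
      rcases eq_or_lt_of_le hb with h | h
      · have : θ = θ' := Prod.ext ha h
        rw [this]
      · have h1 := hic θ hθ θ' hθ' ha
        have h2 := hic θ' hθ' θ hθ ha.symm
        rw [← ha] at h2
        nlinarith
    -- ord-connectedness of the image of merit
    have hconn : OrdConnected (η '' Θ) :=
      (hΘconv.isPreconnected.image η hηcont.continuousOn).ordConnected
    -- local monotonicity of x in merit
    have hloc : ∀ θ ∈ Θ, ∃ δ > 0, ∀ θa ∈ Θ, ∀ θb ∈ Θ,
        |η θa - η θ| < δ → |η θb - η θ| < δ → η θa ≤ η θb → x θa ≤ x θb := by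
      intro θ hθ
      obtain ⟨ε, hε, hball⟩ := Metric.isOpen_iff.mp hΘopen θ hθ
      have hmem : ∀ s ∈ Icc (θ.2 - ε/2) (θ.2 + ε/2), (θ.1, s) ∈ Θ := by
        intro s hs
        apply hball
        rw [Metric.mem_ball, Prod.dist_eq]
        apply max_lt
        · simpa [Real.dist_eq] using hε
        · rw [Real.dist_eq, abs_sub_lt_iff]
          constructor <;> [linarith [hs.2]; linarith [hs.1]]
      have h1 : η (θ.1, θ.2 - ε/2) < η θ := by
        have := (hηβ θ.1) (show θ.2 - ε/2 < θ.2 by linarith)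
        simpa using this
      have h2 : η θ < η (θ.1, θ.2 + ε/2) := by
        have := (hηβ θ.1) (show θ.2 < θ.2 + ε/2 by linarith)
        simpa using this
      refine ⟨min (η (θ.1, θ.2 + ε/2) - η θ) (η θ - η (θ.1, θ.2 - ε/2)),
        lt_min (by linarith) (by linarith), ?_⟩
      intro θa hθa θb hθb hda hdb hab
      have hcont : Continuous fun s => η (θ.1, s) :=
        hηcont.comp (continuous_const.prodMk continuous_id)
      have hivt := intermediate_value_Icc (show θ.2 - ε/2 ≤ θ.2 + ε/2 by linarith)
        hcont.continuousOn
      have hmema : η θa ∈ Icc (η (θ.1, θ.2 - ε/2)) (η (θ.1, θ.2 + ε/2)) := by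
        rw [abs_sub_lt_iff] at hda
        constructor <;>
          [linarith [hda.1, hda.2, min_le_right (η (θ.1, θ.2 + ε/2) - η θ) (η θ - η (θ.1, θ.2 - ε/2))];
           linarith [hda.1, min_le_left (η (θ.1, θ.2 + ε/2) - η θ) (η θ - η (θ.1, θ.2 - ε/2))]]
      have hmemb : η θb ∈ Icc (η (θ.1, θ.2 - ε/2)) (η (θ.1, θ.2 + ε/2)) := by
        rw [abs_sub_lt_iff] at hdb
        constructor <;>
          [linarith [hdb.1, hdb.2, min_le_right (η (θ.1, θ.2 + ε/2) - η θ) (η θ - η (θ.1, θ.2 - ε/2))];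
           linarith [hdb.1, min_le_left (η (θ.1, θ.2 + ε/2) - η θ) (η θ - η (θ.1, θ.2 - ε/2))]]
      obtain ⟨sa, hsa, hsaeq⟩ := hivt hmema
      obtain ⟨sb, hsb, hsbeq⟩ := hivt hmemb
      have hsasb : sa ≤ sb := by
        have h3 : η (θ.1, sa) ≤ η (θ.1, sb) := by
          calc η (θ.1, sa) = η θa := hsaeq
            _ ≤ η θb := hab
            _ = η (θ.1, sb) := hsbeq.symm
        exact ((hηβ θ.1).le_iff_le).mp h3
      calc x θa = x (θ.1, sa) := heq θa hθa _ (hmem sa hsa) hsaeq.symm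
        _ ≤ x (θ.1, sb) := hslice _ (hmem sa hsa) _ (hmem sb hsb) rfl hsasb
        _ = x θb := heq _ (hmem sb hsb) θb hθb hsbeq
    -- global monotonicity in merit
    have hK : ∀ θ1 ∈ Θ, ∀ θ2 ∈ Θ, η θ1 ≤ η θ2 → x θ1 ≤ x θ2 := by
      intro θ1 h1 θ2 h2 hle
      rcases eq_or_lt_of_le hle with he | hlt
      · exact (heq θ1 h1 θ2 h2 he).le
      have himage : Icc (η θ1) (η θ2) ⊆ η '' Θ := hconn.out ⟨θ1, h1, rfl⟩ ⟨θ2, h2, rfl⟩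
      set S := {t ∈ Icc (η θ1) (η θ2) | ∀ θ ∈ Θ, η θ = t → x θ1 ≤ x θ} with hSdef
      have ht1S : η θ1 ∈ S := ⟨⟨le_rfl, hle⟩, fun θ hθ hη => (heq θ1 h1 θ hθ hη.symm).le⟩
      have hSne : S.Nonempty := ⟨η θ1, ht1S⟩
      have hSbdd : BddAbove S := ⟨η θ2, fun t ht => ht.1.2⟩
      have hcmem : sSup S ∈ Icc (η θ1) (η θ2) :=
        ⟨le_csSup hSbdd ht1S, csSup_le hSne fun t ht => ht.1.2⟩
      obtain ⟨θc, hθc, hηc⟩ := himage hcmem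
      obtain ⟨δ, hδ, hlocal⟩ := hloc θc hθc
      have hstep1 : x θ1 ≤ x θc := by
        obtain ⟨u, huS, hu⟩ := exists_lt_of_lt_csSup hSne (show sSup S - δ < sSup S by linarith)
        obtain ⟨θu, hθu, hηu⟩ := himage huS.1
        have hu2 : u ≤ sSup S := le_csSup hSbdd huS
        have hd : |η θu - η θc| < δ := by
          rw [hηu, hηc, abs_sub_lt_iff]; constructor <;> linarith
        have hd0 : |η θc - η θc| < δ := by simpa using hδ
        have := hlocal θu hθu θc hθc hd hd0 (by rw [hηu, hηc]; exact hu2)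
        exact le_trans (huS.2 θu hθu hηu) this
      have hct2 : sSup S = η θ2 := by
        by_contra hne
        have hclt : sSup S < η θ2 := lt_of_le_of_ne hcmem.2 hne
        have ht'1 : sSup S < min (η θ2) (sSup S + δ/2) := lt_min hclt (by linarith)
        have ht'mem : min (η θ2) (sSup S + δ/2) ∈ Icc (η θ1) (η θ2) :=
          ⟨le_trans hcmem.1 ht'1.le, min_le_left _ _⟩
        have ht'S : min (η θ2) (sSup S + δ/2) ∈ S := by
          refine ⟨ht'mem, ?_⟩
          intro θ hθ hη
          have hd : |η θ - η θc| < δ := by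
            rw [hη, hηc, abs_sub_lt_iff]
            constructor
            · linarith [min_le_right (η θ2) (sSup S + δ/2)]
            · linarith
          have hd0 : |η θc - η θc| < δ := by simpa using hδ
          have := hlocal θc hθc θ hθ hd0 hd (by rw [hηc, hη]; exact ht'1.le)
          exact le_trans hstep1 this
        exact absurd (le_csSup hSbdd ht'S) (not_le.mpr ht'1)
      have : η θc = η θ2 := by rw [hηc, hct2]
      calc x θ1 ≤ x θc := hstep1
        _ = x θ2 := heq θc hθc θ2 h2 this
    -- build xhat
    have hrep : ∀ θ ∈ Θ, x θ =
        (fun t => if h : ∃ θ' ∈ Θ, η θ' = t then x h.choose else 0) (η θ) := by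
      intro θ hθ
      have hex : ∃ θ' ∈ Θ, η θ' = η θ := ⟨θ, hθ, rfl⟩
      simp only [dif_pos hex]
      exact heq θ hθ hex.choose hex.choose_spec.1 hex.choose_spec.2.symm
    refine ⟨fun t => if h : ∃ θ' ∈ Θ, η θ' = t then x h.choose else 0, hrep, ?_⟩
    intro θa ha θb hb hab
    rw [← hrep θa ha, ← hrep θb hb]
    exact hK θa ha θb hb hab
  · rintro ⟨xhat, hx, hmono⟩
    constructor
    · intro θ1 h1 θ2 h2 he
      rw [hx θ1 h1, hx θ2 h2, he]
    · -- slice monotonicity of x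
      have hslice : ∀ a s t, (a, s) ∈ Θ → (a, t) ∈ Θ → s ≤ t → x (a, s) ≤ x (a, t) := by
        intro a s t hs ht hst
        rw [hx _ hs, hx _ ht]
        exact hmono (a, s) hs (a, t) ht ((hηβ a).monotone hst)
      set z : ℝ → ℝ → ℝ :=
        fun a s => sSup (insert 0 {v | ∃ t, (a, t) ∈ Θ ∧ t ≤ s ∧ x (a, t) = v}) with hzdef
      have hbdd : ∀ a s, BddAbove (insert 0 {v | ∃ t, (a, t) ∈ Θ ∧ t ≤ s ∧ x (a, t) = v}) := by
        intro a s
        refine ⟨1, ?_⟩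
        rintro v (rfl | ⟨t, ht, -, rfl⟩)
        · norm_num
        · exact (hxrange _ ht).2
      have hz0 : ∀ a s, 0 ≤ z a s := fun a s => le_csSup (hbdd a s) (mem_insert _ _)
      have hzmono : ∀ a, Monotone (z a) := by
        intro a s t hst
        apply csSup_le_csSup (hbdd a t) (insert_nonempty _ _)
        apply insert_subset_insert
        rintro v ⟨u, hu, hus, rfl⟩
        exact ⟨u, hu, le_trans hus hst, rfl⟩
      have hzx : ∀ a s, (a, s) ∈ Θ → z a s = x (a, s) := by
        intro a s hs
        apply le_antisymm
        · apply csSup_le (insert_nonempty _ _)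
          rintro v (rfl | ⟨t, ht, hts, rfl⟩)
          · exact (hxrange _ hs).1
          · exact hslice a t s ht hs hts
        · exact le_csSup (hbdd a s) (Or.inr ⟨s, hs, le_rfl, rfl⟩)
      have hintg : ∀ a (b c : ℝ), IntervalIntegrable (z a) MeasureTheory.volume b c :=
        fun a b c => (hzmono a).intervalIntegrable
      -- the payment rule
      refine ⟨fun θ => (θ.2 * x θ - ∫ s in (0:ℝ)..θ.2, z θ.1 s) / w θ.1, ?_, ?_⟩
      · rintro ⟨a, b⟩ hθ ⟨a', b'⟩ hθ' ha
        simp only at ha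
        subst ha
        have hw : w a ≠ 0 := ne_of_gt (hwpos a)
        have hcancel : ∀ A : ℝ, w a * (A / w a) = A := fun A => by field_simp
        simp only [ge_iff_le, hcancel]
        -- reduce to an integral inequality
        have hsplit : (∫ s in (0:ℝ)..b, z a s) =
            (∫ s in (0:ℝ)..b', z a s) + ∫ s in b'..b, z a s :=
          (intervalIntegral.integral_add_adjacent_intervals (hintg a 0 b') (hintg a b' b)).symm
        have hint : (b - b') * z a b' ≤ ∫ s in b'..b, z a s := by
          rcases le_total b' b with hbb | hbb
          · have hmo : ∀ s ∈ Icc b' b, z a b' ≤ z a s := fun s hs => hzmono a hs.1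
            have := intervalIntegral.integral_mono_on hbb
              (intervalIntegrable_const) (hintg a b' b) hmo
            rw [intervalIntegral.integral_const] at this
            simpa [smul_eq_mul] using this
          · have hmo : ∀ s ∈ Icc b b', z a s ≤ z a b' := fun s hs => hzmono a hs.2
            have := intervalIntegral.integral_mono_on hbb
              (hintg a b b') (intervalIntegrable_const) hmo
            rw [intervalIntegral.integral_const] at this
            rw [intervalIntegral.integral_symm]
            simp only [smul_eq_mul] at this
            linarith
        have hzb' : z a b' = x (a, b') := hzx a b' hθ'
        rw [hzb'] at hint
        linarith [hsplit, hint]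
      · rintro ⟨a, b⟩ hθ
        have hw : w a ≠ 0 := ne_of_gt (hwpos a)
        have hcancel : ∀ A : ℝ, w a * (A / w a) = A := fun A => by field_simp
        show 0 ≤ b * x (a, b) - w a * ((b * x (a, b) - ∫ s in (0:ℝ)..b, z a s) / w a)
        rw [hcancel]
        have hb : (0:ℝ) ≤ b := (hΘpos _ hθ).le
        have : 0 ≤ ∫ s in (0:ℝ)..b, z a s :=
          intervalIntegral.integral_nonneg hb fun s _ => hz0 a s
        linarith
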